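/- Let n ≥ 1, let w : P(N) → ℝ, let D be the diagonal matrix indexed by P_{n−1}(N) with entries w_I^N and let v be the vector indexed by P_{n−1}(N) with v_I = (−1)^{n+1−|I|}. The matrix D + w_N^N · v vᵀ is positive semidefinite if and only if either w_I^N ≥ 0 for all I ⊆ N, or the following three conditions all hold: w_K^N < 0 for exactly one subset K ⊆ N; w_J^N > 0 for all J ⊆ N with J ≠ K; and Σ_{I ⊆ N} 1/w_I^N ≤ 0. -/

import Mathlib

open Finset Matrix

/-- `w_I^N := ∑_{H ⊆ N \ I} (-1)^{|H|} w_{H ∪ I}`. -/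
def mob {n : ℕ} (w : Finset (Fin n) → ℝ) (I : Finset (Fin n)) : ℝ :=
  ∑ H ∈ (Finset.univ \ I).powerset, (-1 : ℝ) ^ H.card * w (H ∪ I)

/-- The index set `P_{n-1}(N)`: all subsets of `N = {1,...,n}` except `N` itself. -/
abbrev Idx (n : ℕ) := {I : Finset (Fin n) // I ≠ Finset.univ}

/-- Backward direction of the hyperplane characterization. -/
lemma key_mpr {ι : Type*} [Fintype ι] [DecidableEq ι] (d : ι → ℝ)
    (h : (∀ i, 0 ≤ d i) ∨ ∃ k, d k < 0 ∧ (∀ j, j ≠ k → 0 < d j) ∧ ∑ i, 1 / d i ≤ 0) :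
    ∀ x : ι → ℝ, ∑ i, x i = 0 → 0 ≤ ∑ i, d i * x i ^ 2 := by
  intro x hx
  rcases h with h | ⟨k, hk, hpos, hsum⟩
  · exact Finset.sum_nonneg fun i _ => mul_nonneg (h i) (sq_nonneg _)
  · have hsplit : ∀ f : ι → ℝ, ∑ i, f i = f k + ∑ i ∈ univ.erase k, f i := by
      intro f; rw [Finset.add_sum_erase univ f (mem_univ k)]
    have hxk : x k = -∑ i ∈ univ.erase k, x i := by
      have := hsplit x; rw [hx] at this; linarith
    set S := ∑ i ∈ univ.erase k, d i * x i ^ 2 with hSdef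
    set T := ∑ i ∈ univ.erase k, 1 / d i with hTdef
    have hS : (0:ℝ) ≤ S :=
      Finset.sum_nonneg fun i hi => mul_nonneg (hpos i (Finset.ne_of_mem_erase hi)).le (sq_nonneg _)
    have hT : (0:ℝ) ≤ T :=
      Finset.sum_nonneg fun i hi => by
        have := hpos i (Finset.ne_of_mem_erase hi); positivity
    have hCS : (∑ i ∈ univ.erase k, x i) ^ 2 ≤ S * T := by
      have := Finset.sum_mul_sq_le_sq_mul_sq (univ.erase k)
        (fun i => Real.sqrt (d i) * x i) (fun i => 1 / Real.sqrt (d i))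
      have e1 : ∑ i ∈ univ.erase k, (Real.sqrt (d i) * x i) * (1 / Real.sqrt (d i))
          = ∑ i ∈ univ.erase k, x i := by
        refine Finset.sum_congr rfl fun i hi => ?_
        have hd := hpos i (Finset.ne_of_mem_erase hi)
        have hs : Real.sqrt (d i) ≠ 0 := by positivity
        field_simp
      have e2 : ∑ i ∈ univ.erase k, (Real.sqrt (d i) * x i) ^ 2 = S := by
        refine Finset.sum_congr rfl fun i hi => ?_
        have hd := hpos i (Finset.ne_of_mem_erase hi)
        rw [mul_pow, Real.sq_sqrt hd.le]
      have e3 : ∑ i ∈ univ.erase k, (1 / Real.sqrt (d i)) ^ 2 = T := by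
        refine Finset.sum_congr rfl fun i hi => ?_
        have hd := hpos i (Finset.ne_of_mem_erase hi)
        rw [div_pow, one_pow, Real.sq_sqrt hd.le]
      rw [e1, e2, e3] at this; exact this
    have hu : d k * (1 / d k) = 1 := mul_one_div_cancel hk.ne
    have hsum' : 1 / d k + T ≤ 0 := by rw [hsplit (fun i => 1 / d i)] at hsum; exact hsum
    have h1 : 0 ≤ d k * T + 1 := by nlinarith
    rw [hsplit (fun i => d i * x i ^ 2)]
    have hxk2 : x k ^ 2 ≤ S * T := by
      rw [hxk, neg_pow]; simpa using hCS
    nlinarith [mul_nonneg hS h1]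

lemma key_pos {ι : Type*} [Fintype ι] [DecidableEq ι] (d : ι → ℝ)
    (H : ∀ x : ι → ℝ, ∑ i, x i = 0 → 0 ≤ ∑ i, d i * x i ^ 2)
    {k : ι} (hk : d k < 0) : ∀ j, j ≠ k → 0 < d j := by
  intro j hjk
  have hsplit2 : ∀ f : ι → ℝ,
      ∑ i, f i = f k + f j + ∑ i ∈ (univ.erase k).erase j, f i := by
    intro f
    rw [← Finset.add_sum_erase univ f (mem_univ k),
      ← Finset.add_sum_erase _ f (Finset.mem_erase.2 ⟨hjk, mem_univ j⟩), add_assoc]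
  set x : ι → ℝ := fun i => if i = k then 1 else if i = j then -1 else 0 with hxdef
  have htail : ∀ f : ι → ℝ, (∀ i, i ≠ k → i ≠ j → f i = 0) →
      ∑ i ∈ (univ.erase k).erase j, f i = 0 := by
    intro f hf
    refine Finset.sum_eq_zero fun i hi => ?_
    simp only [Finset.mem_erase] at hi
    exact hf i hi.2.1 hi.1
  have hx : ∑ i, x i = 0 := by
    rw [hsplit2 x, htail x (fun i h1 h2 => by simp [hxdef, h1, h2])]
    simp [hxdef, hjk]
  have hQ := H x hx
  rw [hsplit2 (fun i => d i * x i ^ 2),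
    htail _ (fun i h1 h2 => by simp [hxdef, h1, h2])] at hQ
  simp only [hxdef, if_pos rfl, if_neg hjk, one_pow] at hQ
  norm_num at hQ
  linarith

/-- PSD-ness of a diagonal quadratic form on the hyperplane `∑ x = 0`. -/
lemma key {ι : Type*} [Fintype ι] [DecidableEq ι] (hcard : 2 ≤ Fintype.card ι) (d : ι → ℝ) :
    (∀ x : ι → ℝ, ∑ i, x i = 0 → 0 ≤ ∑ i, d i * x i ^ 2) ↔
    ((∀ i, 0 ≤ d i) ∨ ∃ k, d k < 0 ∧ (∀ j, j ≠ k → 0 < d j) ∧ ∑ i, 1 / d i ≤ 0) := by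
  constructor
  · intro H
    by_cases hall : ∀ i, 0 ≤ d i
    · exact Or.inl hall
    push_neg at hall
    obtain ⟨k, hk⟩ := hall
    have hk : d k < 0 := hk
    have hpos := key_pos d H hk
    refine Or.inr ⟨k, hk, hpos, ?_⟩
    set T := ∑ i ∈ univ.erase k, 1 / d i with hTdef
    have hne : (univ.erase k).Nonempty := by
      rw [← Finset.card_pos, Finset.card_erase_of_mem (mem_univ k), Finset.card_univ]
      omega
    have hT : 0 < T :=
      Finset.sum_pos (fun i hi => by
        have := hpos i (Finset.ne_of_mem_erase hi); positivity) hne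
    set x : ι → ℝ := fun i => if i = k then -T else 1 / d i with hxdef
    have hsplit : ∀ f : ι → ℝ, ∑ i, f i = f k + ∑ i ∈ univ.erase k, f i := by
      intro f; rw [Finset.add_sum_erase univ f (mem_univ k)]
    have hx : ∑ i, x i = 0 := by
      rw [hsplit x]
      have : ∑ i ∈ univ.erase k, x i = T := by
        refine Finset.sum_congr rfl fun i hi => ?_
        simp [hxdef, Finset.ne_of_mem_erase hi]
      rw [this]; simp [hxdef]
    have hQ := H x hx
    rw [hsplit (fun i => d i * x i ^ 2)] at hQ
    have e1 : ∑ i ∈ univ.erase k, d i * x i ^ 2 = T := by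
      refine Finset.sum_congr rfl fun i hi => ?_
      have hd := hpos i (Finset.ne_of_mem_erase hi)
      simp only [hxdef, if_neg (Finset.ne_of_mem_erase hi)]
      field_simp
    rw [e1] at hQ
    simp only [hxdef, if_pos rfl] at hQ
    have h2 : ((-T)) ^ 2 = T ^ 2 := by ring
    rw [h2] at hQ
    have h1 : 0 ≤ d k * T + 1 := by nlinarith
    rw [hsplit (fun i => 1 / d i)]
    have hu : d k * (1 / d k) = 1 := mul_one_div_cancel hk.ne
    nlinarith
  · exact key_mpr d

lemma quad_eq {m : Type*} [Fintype m] [DecidableEq m] (d : m → ℝ) (c : ℝ) (v x : m → ℝ) :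
    dotProduct x ((Matrix.diagonal d + c • Matrix.vecMulVec v v) *ᵥ x)
      = ∑ i, d i * x i ^ 2 + c * (∑ i, v i * x i) ^ 2 := by
  have hmv : ∀ i, ((Matrix.diagonal d + c • Matrix.vecMulVec v v) *ᵥ x) i
      = d i * x i + c * v i * (∑ j, v j * x j) := by
    intro i
    rw [add_mulVec, Pi.add_apply, mulVec_diagonal, Matrix.smul_mulVec,
      Pi.smul_apply, smul_eq_mul]
    congr 1
    rw [mul_assoc]
    congr 1
    simp only [mulVec, dotProduct, vecMulVec_apply]
    rw [Finset.mul_sum]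
    exact Finset.sum_congr rfl fun j _ => by ring
  simp only [dotProduct, hmv, mul_add, Finset.sum_add_distrib]
  congr 1
  · exact Finset.sum_congr rfl fun i _ => by ring
  · have e : ∑ i, x i * (c * v i * (∑ j, v j * x j))
        = c * (∑ j, v j * x j) * ∑ i, v i * x i := by
      rw [Finset.mul_sum]
      exact Finset.sum_congr rfl fun i _ => by ring
    rw [e]; ring

lemma herm {m : Type*} [Fintype m] [DecidableEq m] (d : m → ℝ) (c : ℝ) (v : m → ℝ) :
    (Matrix.diagonal d + c • Matrix.vecMulVec v v).IsHermitian := by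
  unfold Matrix.IsHermitian
  ext i j
  simp only [Matrix.conjTranspose_apply, Pi.add_apply, Matrix.add_apply, Pi.smul_apply,
    Matrix.smul_apply, smul_eq_mul, vecMulVec_apply, star_trivial]
  rw [Matrix.diagonal_apply, Matrix.diagonal_apply]
  by_cases h : i = j <;> simp [h, eq_comm, mul_comm]

lemma sum_split (n : ℕ) (f : Finset (Fin n) → ℝ) :
    ∑ I : Finset (Fin n), f I = f Finset.univ + ∑ I : Idx n, f I.1 := by
  rw [← Finset.add_sum_erase (Finset.univ : Finset (Finset (Fin n))) f (mem_univ Finset.univ)]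
  congr 1
  exact (Finset.sum_subtype ((Finset.univ : Finset (Finset (Fin n))).erase Finset.univ)
    (fun I => by simp [Finset.mem_erase]) f)

/-- `D + w_N^N · v vᵀ` is PSD iff either all `w_I^N ≥ 0`, or there is exactly one `K` with
`w_K^N < 0`, all other `w_J^N > 0`, and `∑_{I ⊆ N} 1/w_I^N ≤ 0`. -/
theorem posSemidef_almost_diagonal_iff (n : ℕ) (hn : 1 ≤ n)
    (w : Finset (Fin n) → ℝ)
    (v : Idx n → ℝ) (hv : ∀ I : Idx n, v I = (-1 : ℝ) ^ (n + 1 - I.1.card)) :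
    (Matrix.diagonal (fun I : Idx n => mob w I.1)
        + mob w Finset.univ • Matrix.vecMulVec v v).PosSemidef
      ↔ ((∀ I : Finset (Fin n), 0 ≤ mob w I) ∨
          (∃ K : Finset (Fin n), mob w K < 0 ∧
            (∀ J : Finset (Fin n), J ≠ K → 0 < mob w J) ∧
            ∑ I : Finset (Fin n), 1 / mob w I ≤ 0)) := by
  classical
  have hcard : 2 ≤ Fintype.card (Finset (Fin n)) := by
    rw [Fintype.card_finset, Fintype.card_fin]
    calc (2:ℕ) = 2 ^ 1 := rfl
    _ ≤ 2 ^ n := Nat.pow_le_pow_right (by norm_num) hn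
  have hv2 : ∀ I : Idx n, v I ^ 2 = 1 := by
    intro I
    rw [hv, ← pow_mul, mul_comm, pow_mul]
    norm_num
  have step1 : (Matrix.diagonal (fun I : Idx n => mob w I.1)
        + mob w Finset.univ • Matrix.vecMulVec v v).PosSemidef ↔
      ∀ x : Idx n → ℝ, 0 ≤ ∑ I : Idx n, mob w I.1 * x I ^ 2
          + mob w Finset.univ * (∑ I : Idx n, v I * x I) ^ 2 := by
    constructor
    · intro h x
      have := h.dotProduct_mulVec_nonneg x
      rwa [star_trivial, quad_eq] at this
    · intro h
      refine .of_dotProduct_mulVec_nonneg (herm _ _ _) fun x => ?_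
      rw [star_trivial, quad_eq]
      exact h x
  have step2 : (∀ x : Idx n → ℝ, 0 ≤ ∑ I : Idx n, mob w I.1 * x I ^ 2
          + mob w Finset.univ * (∑ I : Idx n, v I * x I) ^ 2) ↔
      (∀ z : Finset (Fin n) → ℝ, ∑ I : Finset (Fin n), z I = 0 →
        0 ≤ ∑ I : Finset (Fin n), mob w I * z I ^ 2) := by
    constructor
    · intro h z hz
      have hq := h (fun I => v I * z I.1)
      have e1 : ∑ I : Idx n, mob w I.1 * (v I * z I.1) ^ 2
          = ∑ I : Idx n, mob w I.1 * z I.1 ^ 2 :=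
        Finset.sum_congr rfl fun I _ => by rw [mul_pow, hv2 I, one_mul]
      have e2 : ∑ I : Idx n, v I * (v I * z I.1) = ∑ I : Idx n, z I.1 :=
        Finset.sum_congr rfl fun I _ => by rw [← mul_assoc, ← sq, hv2 I, one_mul]
      rw [e1, e2] at hq
      have e3 : ∑ I : Idx n, z I.1 = - z Finset.univ := by
        have := sum_split n z
        rw [hz] at this
        linarith
      rw [e3] at hq
      rw [sum_split n (fun I => mob w I * z I ^ 2)]
      have e4 : (- z Finset.univ) ^ 2 = z Finset.univ ^ 2 := by ring
      rw [e4] at hq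
      linarith
    · intro h x
      set z : Finset (Fin n) → ℝ := fun I =>
        if hI : I = Finset.univ then -(∑ J : Idx n, v J * x J)
        else v ⟨I, hI⟩ * x ⟨I, hI⟩ with hzdef
      have hzI : ∀ I : Idx n, z I.1 = v I * x I := by
        intro I
        simp only [hzdef, dif_neg I.2]
      have hzu : z Finset.univ = -(∑ J : Idx n, v J * x J) := by
        simp only [hzdef, dif_pos rfl]
      have hz : ∑ I : Finset (Fin n), z I = 0 := by
        rw [sum_split n z, hzu]
        have : ∑ I : Idx n, z I.1 = ∑ J : Idx n, v J * x J :=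
          Finset.sum_congr rfl fun I _ => hzI I
        rw [this]
        ring
      have hq := h z hz
      rw [sum_split n (fun I => mob w I * z I ^ 2), hzu] at hq
      have e1 : ∑ I : Idx n, mob w I.1 * z I.1 ^ 2
          = ∑ I : Idx n, mob w I.1 * x I ^ 2 :=
        Finset.sum_congr rfl fun I _ => by rw [hzI I, mul_pow, hv2 I, one_mul]
      rw [e1] at hq
      have e2 : (-(∑ J : Idx n, v J * x J)) ^ 2 = (∑ J : Idx n, v J * x J) ^ 2 := by ring
      rw [e2] at hq
      linarith
  rw [step1, step2, key hcard (mob w)]
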